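/- For real numbers α, β, γ with β ≠ 0 and all integers n ≥ 0, 0 ≤ k ≤ n, the generalized Stirling numbers defined by the recurrence S(n+1,k;α,β,γ) = S(n,k-1;α,β,γ) + (kβ - nα + γ)·S(n,k;α,β,γ), with S(0,0) = 1, S(n,k) = 0 for k > n or k < 0, satisfy the explicit formula S(n,k;α,β,γ) = (1/(β^k k!)) · Σ_{s=0}^{k} (-1)^{k-s} · C(k,s) · (βs+γ | α)_n, where (t|α)_n = Π_{j=0}^{n-1}(t - jα) is the generalized falling factorial with (t|α)_0 = 1. -/

import Mathlib

open Finset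

/-- Generalized factorial polynomial `(t|α)_n = ∏_{j=0}^{n-1} (t - jα)`. -/
noncomputable def gfact (t α : ℝ) (n : ℕ) : ℝ := ∏ j ∈ Finset.range n, (t - j * α)

/-- Hsu–Shiue generalized Stirling numbers defined by the triangular recurrence
`S(n+1,k) = S(n,k-1) + (kβ - nα + γ) S(n,k)`, with `S(0,0)=1` and `S(n,k)=0` for `k>n`
(the `k = 0` case uses `S(n,-1) = 0`). -/
noncomputable def Srec (α β γ : ℝ) : ℕ → ℕ → ℝ
  | 0, 0 => 1
  | 0, _ + 1 => 0
  | n + 1, 0 => (0 * β - n * α + γ) * Srec α β γ n 0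
  | n + 1, k + 1 => Srec α β γ n k + ((k + 1 : ℕ) * β - n * α + γ) * Srec α β γ n (k + 1)

/-- Alternating binomial transform `E_k f = ∑_{s=0}^k (-1)^s C(k,s) f(s)`. -/
noncomputable def Ek (k : ℕ) (f : ℕ → ℝ) : ℝ :=
  ∑ s ∈ Finset.range (k + 1), (-1 : ℝ) ^ s * (Nat.choose k s : ℝ) * f s

lemma Ek_succ (k : ℕ) (f : ℕ → ℝ) :
    Ek (k + 1) f = Ek k f - Ek k (fun s => f (s + 1)) := by
  unfold Ek
  rw [Finset.sum_range_succ' (fun s => (-1 : ℝ) ^ s * (Nat.choose (k + 1) s : ℝ) * f s) (k + 1),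
      Finset.sum_range_succ' (fun s => (-1 : ℝ) ^ s * (Nat.choose k s : ℝ) * f s) k]
  have h1 : ∀ i, ((Nat.choose (k + 1) (i + 1) : ℝ)) =
      (Nat.choose k i : ℝ) + (Nat.choose k (i + 1) : ℝ) := by
    intro i; exact_mod_cast congrArg (Nat.cast (R := ℝ)) (Nat.choose_succ_succ k i)
  simp only [h1]
  have h2 : ∑ i ∈ Finset.range (k + 1),
      (-1 : ℝ) ^ (i + 1) * ((Nat.choose k i : ℝ) + (Nat.choose k (i + 1) : ℝ)) * f (i + 1)
      = (∑ i ∈ Finset.range (k + 1), (-1 : ℝ) ^ (i + 1) * (Nat.choose k i : ℝ) * f (i + 1))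
        + ∑ i ∈ Finset.range (k + 1),
            (-1 : ℝ) ^ (i + 1) * (Nat.choose k (i + 1) : ℝ) * f (i + 1) := by
    rw [← Finset.sum_add_distrib]; exact Finset.sum_congr rfl fun i _ => by ring
  rw [h2, Finset.sum_range_succ
      (fun i => (-1 : ℝ) ^ (i + 1) * (Nat.choose k (i + 1) : ℝ) * f (i + 1)) k,
    Nat.choose_succ_self, Nat.choose_zero_right]
  have h3 : (∑ i ∈ Finset.range (k + 1), (-1 : ℝ) ^ (i + 1) * (Nat.choose k i : ℝ) * f (i + 1))
      = -∑ i ∈ Finset.range (k + 1), (-1 : ℝ) ^ i * (Nat.choose k i : ℝ) * f (i + 1) := by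
    rw [← Finset.sum_neg_distrib]; exact Finset.sum_congr rfl fun i _ => by ring
  rw [h3]
  simp only [Nat.cast_zero, Nat.cast_one, Nat.choose_zero_right]
  ring

lemma Ek_mul_s (k : ℕ) (f : ℕ → ℝ) :
    ∑ s ∈ Finset.range (k + 2), (-1 : ℝ) ^ s * (Nat.choose (k + 1) s : ℝ) * ((s : ℝ) * f s)
      = -((k : ℝ) + 1) * Ek k (fun s => f (s + 1)) := by
  unfold Ek
  rw [Finset.sum_range_succ'
      (fun s => (-1 : ℝ) ^ s * (Nat.choose (k + 1) s : ℝ) * ((s : ℝ) * f s)) (k + 1)]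
  have h1 : ∀ i : ℕ, ((Nat.choose (k + 1) (i + 1) : ℝ)) * ((i : ℝ) + 1)
      = ((k : ℝ) + 1) * (Nat.choose k i : ℝ) := by
    intro i
    have := Nat.add_one_mul_choose_eq k i
    have : ((k + 1) * Nat.choose k i : ℕ) = (Nat.choose (k + 1) (i + 1) * (i + 1) : ℕ) := this
    exact_mod_cast (congrArg (Nat.cast (R := ℝ)) this).symm
  have h2 : ∑ i ∈ Finset.range (k + 1),
      (-1 : ℝ) ^ (i + 1) * (Nat.choose (k + 1) (i + 1) : ℝ) * (((i : ℕ) + 1 : ℕ) * f (i + 1))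
      = ∑ i ∈ Finset.range (k + 1),
          -(((k : ℝ) + 1) * ((-1 : ℝ) ^ i * (Nat.choose k i : ℝ) * f (i + 1))) := by
    refine Finset.sum_congr rfl fun i _ => ?_
    push_cast
    rw [show ((-1 : ℝ) ^ (i + 1) * (Nat.choose (k + 1) (i + 1) : ℝ) * (((i : ℝ) + 1) * f (i + 1)))
        = ((Nat.choose (k + 1) (i + 1) : ℝ) * ((i : ℝ) + 1)) * ((-1) ^ (i + 1) * f (i + 1)) by ring,
      h1 i]
    ring
  rw [h2, Finset.sum_neg_distrib]
  simp only [pow_zero, Nat.choose_zero_right, Nat.cast_one, Nat.cast_zero, zero_mul, mul_zero,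
    add_zero, one_mul]
  rw [neg_mul, Finset.mul_sum]

lemma Ek_linear (k : ℕ) (b c : ℝ) (f : ℕ → ℝ) :
    Ek (k + 1) (fun s => (b * s + c) * f s)
      = -(b * ((k : ℝ) + 1)) * Ek k f + (b * ((k : ℝ) + 1) + c) * Ek (k + 1) f := by
  have hsplit : Ek (k + 1) (fun s => (b * s + c) * f s)
      = b * (∑ s ∈ Finset.range (k + 2),
          (-1 : ℝ) ^ s * (Nat.choose (k + 1) s : ℝ) * ((s : ℝ) * f s)) + c * Ek (k + 1) f := by
    unfold Ek
    rw [Finset.mul_sum, Finset.mul_sum, ← Finset.sum_add_distrib]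
    exact Finset.sum_congr rfl fun s _ => by ring
  rw [hsplit, Ek_mul_s]
  have hshift : Ek k (fun s => f (s + 1)) = Ek k f - Ek (k + 1) f := by
    have := Ek_succ k f; linarith
  rw [hshift]
  ring

lemma Ek_const_one (k : ℕ) : Ek (k + 1) (fun _ => (1 : ℝ)) = 0 := by
  have : Ek (k + 1) (fun _ => (1 : ℝ)) = Ek k (fun _ => (1 : ℝ)) - Ek k (fun _ => (1 : ℝ)) :=
    Ek_succ k _
  rw [this]; ring

lemma key (α β γ : ℝ) : ∀ n k : ℕ,
    β ^ k * (Nat.factorial k : ℝ) * Srec α β γ n k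
      = (-1 : ℝ) ^ k * Ek k (fun s => gfact (β * s + γ) α n) := by
  intro n
  induction n with
  | zero =>
    intro k
    cases k with
    | zero => simp [Srec, Ek, gfact]
    | succ k =>
      have h : (fun s : ℕ => gfact (β * s + γ) α 0) = fun _ => (1 : ℝ) := by
        funext s; simp [gfact]
      simp [Srec, h, Ek_const_one]
  | succ n ih =>
    intro k
    have hg : ∀ s : ℕ, gfact (β * s + γ) α (n + 1)
        = (β * s + (γ - n * α)) * gfact (β * s + γ) α n := by
      intro s
      unfold gfact
      rw [Finset.prod_range_succ]
      ring
    cases k with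
    | zero =>
      show β ^ 0 * (Nat.factorial 0 : ℝ) * ((0 * β - n * α + γ) * Srec α β γ n 0) = _
      have h0 := ih 0
      simp only [pow_zero, Nat.factorial_zero, Nat.cast_one, one_mul] at h0 ⊢
      simp only [Ek, Finset.sum_range_succ, Finset.sum_range_zero, zero_add, pow_zero,
        Nat.choose_self, Nat.cast_one, Nat.cast_zero, one_mul] at h0 ⊢
      rw [h0]
      have hg0 := hg 0
      push_cast at hg0
      rw [hg0]
      ring
    | succ k =>
      show β ^ (k + 1) * (Nat.factorial (k + 1) : ℝ) *
          (Srec α β γ n k + ((k + 1 : ℕ) * β - n * α + γ) * Srec α β γ n (k + 1)) = _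
      have hE : Ek (k + 1) (fun s => gfact (β * s + γ) α (n + 1))
          = -(β * ((k : ℝ) + 1)) * Ek k (fun s => gfact (β * s + γ) α n)
            + (β * ((k : ℝ) + 1) + (γ - n * α)) * Ek (k + 1) (fun s => gfact (β * s + γ) α n) := by
        have hfun : (fun s : ℕ => gfact (β * s + γ) α (n + 1))
            = fun s : ℕ => (β * s + (γ - n * α)) * gfact (β * s + γ) α n := funext hg
        rw [hfun]
        exact Ek_linear k β (γ - n * α) _
      have h1 := ih k
      have h2 := ih (k + 1)
      have hfac : (Nat.factorial (k + 1) : ℝ) = ((k : ℝ) + 1) * (Nat.factorial k : ℝ) := by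
        rw [Nat.factorial_succ]; push_cast; ring
      rw [hE, hfac]
      have e1 : β ^ (k + 1) * (((k : ℝ) + 1) * (Nat.factorial k : ℝ)) * Srec α β γ n k
          = (β * ((k : ℝ) + 1)) * (β ^ k * (Nat.factorial k : ℝ) * Srec α β γ n k) := by
        ring
      have e2 : β ^ (k + 1) * (((k : ℝ) + 1) * (Nat.factorial k : ℝ)) * Srec α β γ n (k + 1)
          = β ^ (k + 1) * (Nat.factorial (k + 1) : ℝ) * Srec α β γ n (k + 1) := by
        rw [hfac]
      calc β ^ (k + 1) * (((k : ℝ) + 1) * (Nat.factorial k : ℝ)) *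
          (Srec α β γ n k + ((k + 1 : ℕ) * β - n * α + γ) * Srec α β γ n (k + 1))
          = (β * ((k : ℝ) + 1)) * (β ^ k * (Nat.factorial k : ℝ) * Srec α β γ n k)
            + ((k + 1 : ℕ) * β - n * α + γ) *
              (β ^ (k + 1) * (Nat.factorial (k + 1) : ℝ) * Srec α β γ n (k + 1)) := by
            rw [hfac]; push_cast; ring
        _ = (β * ((k : ℝ) + 1)) * ((-1 : ℝ) ^ k * Ek k (fun s => gfact (β * s + γ) α n))
            + ((k + 1 : ℕ) * β - n * α + γ) *
              ((-1 : ℝ) ^ (k + 1) * Ek (k + 1) (fun s => gfact (β * s + γ) α n)) := by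
            rw [h1, h2]
        _ = (-1 : ℝ) ^ (k + 1) *
            (-(β * ((k : ℝ) + 1)) * Ek k (fun s => gfact (β * s + γ) α n)
              + (β * ((k : ℝ) + 1) + (γ - n * α)) *
                Ek (k + 1) (fun s => gfact (β * s + γ) α n)) := by
            push_cast; ring

lemma alt_sum (k : ℕ) (g : ℕ → ℝ) :
    ∑ s ∈ Finset.range (k + 1), (-1 : ℝ) ^ (k - s) * (Nat.choose k s : ℝ) * g s
      = (-1 : ℝ) ^ k * Ek k g := by
  unfold Ek
  rw [Finset.mul_sum]
  refine Finset.sum_congr rfl fun s hs => ?_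
  have hsk : s ≤ k := Nat.lt_succ_iff.mp (Finset.mem_range.mp hs)
  have h : (-1 : ℝ) ^ (k - s) = (-1 : ℝ) ^ k * (-1 : ℝ) ^ s := by
    have : (-1 : ℝ) ^ k = (-1 : ℝ) ^ (k - s) * (-1 : ℝ) ^ s := by
      rw [← pow_add, Nat.sub_add_cancel hsk]
    rw [this, mul_assoc, ← pow_add, ← two_mul, pow_mul, neg_one_sq, one_pow, mul_one]
  rw [h]; ring

theorem stmt0 (α β γ : ℝ) (hβ : β ≠ 0) (n k : ℕ) (hk : k ≤ n) :
    Srec α β γ n k =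
      (1 / (β ^ k * (Nat.factorial k : ℝ))) *
        ∑ s ∈ Finset.range (k + 1),
          (-1 : ℝ) ^ (k - s) * (Nat.choose k s : ℝ) * gfact (β * s + γ) α n := by
  have hkey := key α β γ n k
  rw [alt_sum k (fun s => gfact (β * s + γ) α n), ← hkey]
  have hne : β ^ k * (Nat.factorial k : ℝ) ≠ 0 :=
    mul_ne_zero (pow_ne_zero _ hβ) (Nat.cast_ne_zero.mpr (Nat.factorial_ne_zero k))
  field_simp
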